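/- Let p, q, r be natural numbers with p, q, r ≥ 2. If the triangle group Δ(p,q,r), presented with generators x, y, z and relators x^p, y^q, z^r, x y z, is isomorphic to the Klein four-group ℤ/2 × ℤ/2, then p = q = r = 2. -/
import Mathlib

/-- Relators of the triangle group Δ(p,q,r): generators `x = of 0`, `y = of 1`, `z = of 2`,
relators `x^p, y^q, z^r, xyz`. -/
def triangleRels (p q r : ℕ) : Set (FreeGroup (Fin 3)) :=
  { FreeGroup.of 0 ^ p, FreeGroup.of 1 ^ q, FreeGroup.of 2 ^ r,
    FreeGroup.of 0 * FreeGroup.of 1 * FreeGroup.of 2 }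

lemma triangleHom {p q r : ℕ} {G : Type*} [Group G] (a b c : G)
    (ha : a ^ p = 1) (hb : b ^ q = 1) (hc : c ^ r = 1) (habc : a * b * c = 1) :
    ∃ φ : PresentedGroup (triangleRels p q r) →* G,
      φ (.of 0) = a ∧ φ (.of 1) = b ∧ φ (.of 2) = c := by
  have h : ∀ w ∈ triangleRels p q r, FreeGroup.lift ![a,b,c] w = 1 := by
    intro w hw
    simp only [triangleRels, Set.mem_insert_iff, Set.mem_singleton_iff] at hw
    rcases hw with rfl|rfl|rfl|rfl <;>
      simp [ha, hb, hc, habc]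
  exact ⟨PresentedGroup.toGroup h, by simp, by simp, by simp⟩

theorem triangle_group_iso_klein_four_imp_222 (p q r : ℕ)
    (hp : 2 ≤ p) (hq : 2 ≤ q) (hr : 2 ≤ r)
    (h : Nonempty (PresentedGroup (triangleRels p q r) ≃*
      Multiplicative (ZMod 2 × ZMod 2))) :
    p = 2 ∧ q = 2 ∧ r = 2 := by
  obtain ⟨e⟩ := h
  set Δ := PresentedGroup (triangleRels p q r)
  set x : Δ := PresentedGroup.of 0 with hxdef
  set y : Δ := PresentedGroup.of 1 with hydef
  set z : Δ := PresentedGroup.of 2 with hzdef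
  -- relators are 1
  have hmk : ∀ w ∈ triangleRels p q r, PresentedGroup.mk (triangleRels p q r) w = 1 :=
    fun w hw => (QuotientGroup.eq_one_iff _).mpr (Subgroup.subset_normalClosure hw)
  have hxp : x ^ p = 1 := by
    have := hmk _ (by simp [triangleRels] : FreeGroup.of 0 ^ p ∈ triangleRels p q r)
    rwa [map_pow] at this
  have hyq : y ^ q = 1 := by
    have := hmk _ (by simp [triangleRels] : FreeGroup.of 1 ^ q ∈ triangleRels p q r)
    rwa [map_pow] at this
  have hzr : z ^ r = 1 := by
    have := hmk _ (by simp [triangleRels] : FreeGroup.of 2 ^ r ∈ triangleRels p q r)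
    rwa [map_pow] at this
  have hxyz : x * y * z = 1 := by
    have := hmk _ (by simp [triangleRels] :
      FreeGroup.of 0 * FreeGroup.of 1 * FreeGroup.of 2 ∈ triangleRels p q r)
    rwa [map_mul, map_mul] at this
  -- exponent 2
  have klein_sq : ∀ k : Multiplicative (ZMod 2 × ZMod 2), k * k = 1 := by decide
  have hsq : ∀ g : Δ, g * g = 1 := fun g => e.injective (by rw [map_mul, map_one, klein_sq])
  -- commutativity
  have hcomm : ∀ g h : Δ, g * h = h * g := fun g h =>
    e.injective (by rw [map_mul, map_mul, mul_comm])
  -- not cyclic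
  have hnc : ∀ g : Δ, Subgroup.closure {g} ≠ ⊤ := by
    intro g hg
    have hpow : ∀ n : ℤ, g ^ n = 1 ∨ g ^ n = g := by
      have h2 : g ^ (2:ℤ) = 1 := by rw [zpow_two]; exact hsq g
      intro n
      rcases Int.even_or_odd n with ⟨k, hk⟩ | ⟨k, hk⟩
      · left; rw [hk, ← two_mul, zpow_mul, h2, one_zpow]
      · right; rw [hk, zpow_add, zpow_mul, h2, one_zpow, one_mul, zpow_one]
    have mem : ∀ a : Multiplicative (ZMod 2 × ZMod 2),
        e.symm a = 1 ∨ e.symm a = g := by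
      intro a
      have : e.symm a ∈ Subgroup.closure {g} := hg ▸ Subgroup.mem_top _
      obtain ⟨n, hn⟩ := Subgroup.mem_closure_singleton.mp this
      rw [← hn]; exact hpow n
    have a1 : Multiplicative (ZMod 2 × ZMod 2) := Multiplicative.ofAdd (1, 0)
    rcases mem (Multiplicative.ofAdd (1, 0)) with h1 | h1
    · exact absurd (e.symm.injective (h1.trans (map_one e.symm).symm)) (by decide)
    rcases mem (Multiplicative.ofAdd (0, 1)) with h2 | h2
    · exact absurd (e.symm.injective (h2.trans (map_one e.symm).symm)) (by decide)
    exact absurd (e.symm.injective (h1.trans h2.symm)) (by decide)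
  -- if any exponent is odd, the corresponding generator is trivial
  have kill : ∀ (g : Δ) (n : ℕ), Odd n → g ^ n = 1 → g = 1 := by
    rintro g n ⟨k, rfl⟩ hgn
    have hg : g ^ (2 * k + 1) = g := by
      rw [pow_succ, pow_mul, sq, hsq, one_pow, one_mul]
    exact hg.symm.trans hgn
  -- closure of a single generator is top in the degenerate cases
  have top_of : ∀ g : Δ, x ∈ Subgroup.closure {g} → y ∈ Subgroup.closure {g} →
      z ∈ Subgroup.closure {g} → Subgroup.closure {g} = ⊤ := by
    intro g hx hy hz
    rw [eq_top_iff, ← PresentedGroup.closure_range_of (triangleRels p q r),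
      Subgroup.closure_le]
    rintro _ ⟨i, rfl⟩
    fin_cases i <;> assumption
  -- all of p, q, r are even
  have pe : Even p := by
    by_contra hodd
    have hx1 : x = 1 := kill x p (Nat.not_even_iff_odd.mp hodd) hxp
    refine hnc y (top_of y ?_ (Subgroup.subset_closure rfl) ?_)
    · rw [hx1]; exact one_mem _
    · rw [hx1, one_mul] at hxyz
      rw [eq_inv_of_mul_eq_one_right hxyz]
      exact inv_mem (Subgroup.subset_closure rfl)
  have qe : Even q := by
    by_contra hodd
    have hy1 : y = 1 := kill y q (Nat.not_even_iff_odd.mp hodd) hyq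
    refine hnc x (top_of x (Subgroup.subset_closure rfl) ?_ ?_)
    · rw [hy1]; exact one_mem _
    · have : z = x⁻¹ := by
        rw [hy1, mul_one] at hxyz
        exact eq_inv_of_mul_eq_one_right hxyz
      rw [this]; exact inv_mem (Subgroup.subset_closure rfl)
  have re : Even r := by
    by_contra hodd
    have hz1 : z = 1 := kill z r (Nat.not_even_iff_odd.mp hodd) hzr
    refine hnc x (top_of x (Subgroup.subset_closure rfl) ?_ ?_)
    · rw [hz1, mul_one] at hxyz
      have : y = x⁻¹ := eq_inv_of_mul_eq_one_right hxyz
      rw [this]; exact inv_mem (Subgroup.subset_closure rfl)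
    · rw [hz1]; exact one_mem _
  -- even powers of reflections vanish
  have even_pow : ∀ {G : Type} [Group G] (g : G), g * g = 1 → ∀ {n : ℕ}, Even n → g ^ n = 1 := by
    rintro G _ g hg n ⟨k, rfl⟩
    rw [← two_mul, pow_mul, sq, hg, one_pow]
  -- p = 2
  have hp2 : p = 2 := by
    by_contra hne
    have hp3 : 2 < p := lt_of_le_of_ne hp (Ne.symm hne)
    haveI : Fact (2 < p) := ⟨hp3⟩
    obtain ⟨φ, hφx, hφy, hφz⟩ := triangleHom (p := p) (q := q) (r := r)
      (DihedralGroup.r 1) (DihedralGroup.sr 0) (DihedralGroup.sr (-1))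
      (by rw [DihedralGroup.r_one_pow, ZMod.natCast_self, DihedralGroup.one_def])
      (even_pow _ (DihedralGroup.sr_mul_self 0) qe)
      (even_pow _ (DihedralGroup.sr_mul_self (-1)) re)
      (by rw [DihedralGroup.r_mul_sr, zero_sub, DihedralGroup.sr_mul_self])
    have := hcomm x y
    apply_fun φ at this
    rw [map_mul, map_mul, hφx, hφy, DihedralGroup.r_mul_sr, DihedralGroup.sr_mul_r,
      zero_sub, zero_add] at this
    injection this with h12
    exact (ZMod.neg_one_ne_one (n := p)) h12
  -- q = 2
  have hq2 : q = 2 := by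
    by_contra hne
    have hq3 : 2 < q := lt_of_le_of_ne hq (Ne.symm hne)
    haveI : Fact (2 < q) := ⟨hq3⟩
    obtain ⟨φ, hφx, hφy, hφz⟩ := triangleHom (p := p) (q := q) (r := r)
      (DihedralGroup.sr 0) (DihedralGroup.r 1) (DihedralGroup.sr 1)
      (even_pow _ (DihedralGroup.sr_mul_self 0) pe)
      (by rw [DihedralGroup.r_one_pow, ZMod.natCast_self, DihedralGroup.one_def])
      (even_pow _ (DihedralGroup.sr_mul_self 1) re)
      (by rw [DihedralGroup.sr_mul_r, zero_add, DihedralGroup.sr_mul_self])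
    have := hcomm x y
    apply_fun φ at this
    rw [map_mul, map_mul, hφx, hφy, DihedralGroup.sr_mul_r, DihedralGroup.r_mul_sr,
      zero_sub, zero_add] at this
    injection this with h12
    exact (ZMod.neg_one_ne_one (n := q)) h12.symm
  -- r = 2
  have hr2 : r = 2 := by
    by_contra hne
    have hr3 : 2 < r := lt_of_le_of_ne hr (Ne.symm hne)
    haveI : Fact (2 < r) := ⟨hr3⟩
    obtain ⟨φ, hφx, hφy, hφz⟩ := triangleHom (p := p) (q := q) (r := r)
      (DihedralGroup.sr 0) (DihedralGroup.sr 1) (DihedralGroup.r (-1))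
      (even_pow _ (DihedralGroup.sr_mul_self 0) pe)
      (even_pow _ (DihedralGroup.sr_mul_self 1) qe)
      (by
        have : (DihedralGroup.r (-1) : DihedralGroup r) = (DihedralGroup.r 1)⁻¹ := rfl
        rw [this, inv_pow, DihedralGroup.r_one_pow, ZMod.natCast_self,
          ← DihedralGroup.one_def, inv_one])
      (by rw [DihedralGroup.sr_mul_sr, sub_zero, DihedralGroup.r_mul_r, add_neg_cancel,
        DihedralGroup.one_def])
    have := hcomm x y
    apply_fun φ at this
    rw [map_mul, map_mul, hφx, hφy, DihedralGroup.sr_mul_sr, DihedralGroup.sr_mul_sr,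
      sub_zero, zero_sub] at this
    injection this with h12
    exact (ZMod.neg_one_ne_one (n := r)) h12.symm
  exact ⟨hp2, hq2, hr2⟩
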